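/- If the cubic Hermite interpolant P on [x_i, x_{i+1}] of data (x_i, f_i, ḟ_i), (x_{i+1}, f_{i+1}, ḟ_{i+1}) is monotone (non-decreasing or non-increasing) on [x_i, x_{i+1}], then sign(ḟ_i) = sign(ḟ_{i+1}) = sign(m_i), in the sense that ḟ_i · m_i ≥ 0 and ḟ_{i+1} · m_i ≥ 0 and both ḟ_i and ḟ_{i+1} have the same sign as m_i whenever they are nonzero. -/

import Mathlib

open Set Filter Topology

private lemma deriv_nonneg_left {a b d : ℝ} {f : ℝ → ℝ} (hab : a < b)
    (hf : HasDerivAt f d a) (hmono : MonotoneOn f (Set.Icc a b)) : 0 ≤ d := by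
  have ht : Filter.Tendsto (slope f a) (𝓝[≠] a) (𝓝 d) :=
    hasDerivAt_iff_tendsto_slope.1 hf
  have hsub : Set.Ioc a b ⊆ {x | x ≠ a} := fun x hx => ne_of_gt hx.1
  have ht' : Filter.Tendsto (slope f a) (𝓝[Set.Ioc a b] a) (𝓝 d) :=
    ht.mono_left (nhdsWithin_mono _ hsub)
  have : NeBot (𝓝[Set.Ioc a b] a) := left_nhdsWithin_Ioc_neBot hab
  refine ge_of_tendsto ht' ?_
  filter_upwards [self_mem_nhdsWithin] with x hx
  have h1 : f a ≤ f x := hmono (Set.left_mem_Icc.2 hab.le)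
    (Set.Ioc_subset_Icc_self hx) hx.1.le
  have h2 : (0:ℝ) < x - a := sub_pos.2 hx.1
  rw [slope_def_field]
  exact div_nonneg (by linarith) h2.le

private lemma deriv_nonneg_right {a b d : ℝ} {f : ℝ → ℝ} (hab : a < b)
    (hf : HasDerivAt f d b) (hmono : MonotoneOn f (Set.Icc a b)) : 0 ≤ d := by
  have ht : Filter.Tendsto (slope f b) (𝓝[≠] b) (𝓝 d) :=
    hasDerivAt_iff_tendsto_slope.1 hf
  have hsub : Set.Ico a b ⊆ {x | x ≠ b} := fun x hx => ne_of_lt hx.2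
  have ht' : Filter.Tendsto (slope f b) (𝓝[Set.Ico a b] b) (𝓝 d) :=
    ht.mono_left (nhdsWithin_mono _ hsub)
  have : NeBot (𝓝[Set.Ico a b] b) := right_nhdsWithin_Ico_neBot hab
  refine ge_of_tendsto ht' ?_
  filter_upwards [self_mem_nhdsWithin] with x hx
  have h1 : f x ≤ f b := hmono (Set.Ico_subset_Icc_self hx)
    (Set.right_mem_Icc.2 hab.le) hx.2.le
  have h2 : x - b < (0:ℝ) := sub_neg.2 hx.2
  rw [slope_def_field]
  exact div_nonneg_of_nonpos (by linarith) h2.le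

private lemma fc_mono_aux
    (xi xip fi fip dfi dfip h m : ℝ)
    (hx : xi < xip)
    (hh : h = xip - xi)
    (hm : m = (fip - fi) / h)
    (P : ℝ → ℝ)
    (hP : ∀ x, P x = fi + dfi * (x - xi) + ((m - dfi) / h) * (x - xi) ^ 2
        + ((dfip + dfi - 2 * m) / h ^ 2) * (x - xi) ^ 2 * (x - xip))
    (hmono : MonotoneOn P (Set.Icc xi xip)) :
    0 ≤ m ∧ 0 ≤ dfi ∧ 0 ≤ dfip ∧ (m = 0 → dfi = 0 ∧ dfip = 0) := by
  have hh0 : (0:ℝ) < h := by rw [hh]; linarith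
  have hhne : h ≠ 0 := ne_of_gt hh0
  have hPa : P xi = fi := by simp [hP]
  have hPb : P xip = fi + m * h := by
    rw [hP]
    have : xip - xi = h := by rw [hh]
    rw [this]
    field_simp
    ring
  -- derivative of P everywhere
  have key : ∀ x, HasDerivAt P (dfi + ((m - dfi) / h) * (2 * (x - xi))
      + ((dfip + dfi - 2 * m) / h ^ 2) * (2 * (x - xi)) * (x - xip)
      + ((dfip + dfi - 2 * m) / h ^ 2) * (x - xi) ^ 2) x := by
    intro x
    have hPe : P = fun x => fi + dfi * (x - xi) + ((m - dfi) / h) * (x - xi) ^ 2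
        + ((dfip + dfi - 2 * m) / h ^ 2) * (x - xi) ^ 2 * (x - xip) := funext hP
    rw [hPe]
    have h1 : HasDerivAt (fun x : ℝ => x - xi) 1 x := (hasDerivAt_id x).sub_const xi
    have h2 : HasDerivAt (fun x : ℝ => x - xip) 1 x := (hasDerivAt_id x).sub_const xip
    have h3 : HasDerivAt (fun x : ℝ => (x - xi) ^ 2) (2 * (x - xi)) x := by
      simpa using h1.fun_pow 2
    have h4 := (((h1.const_mul dfi).const_add fi).fun_add (h3.const_mul ((m - dfi) / h))).fun_add
      ((h3.const_mul ((dfip + dfi - 2 * m) / h ^ 2)).fun_mul h2)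
    exact h4.congr_deriv (by ring)
  have hdi : HasDerivAt P dfi xi := by
    have := key xi
    simpa using this
  have hdip : HasDerivAt P dfip xip := by
    have := key xip
    refine this.congr_deriv ?_
    have hxih : xip - xi = h := by rw [hh]
    rw [hxih]
    field_simp
    ring
  have hmnn : 0 ≤ m := by
    have := hmono (Set.left_mem_Icc.2 hx.le) (Set.right_mem_Icc.2 hx.le) hx.le
    rw [hPa, hPb] at this
    nlinarith
  refine ⟨hmnn, deriv_nonneg_left hx hdi hmono, deriv_nonneg_right hx hdip hmono, ?_⟩
  intro hm0
  -- P is constant, evaluate at midpoint and quarter point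
  have hconst : ∀ x ∈ Set.Icc xi xip, P x = fi := by
    intro x hxm
    have h1 : P xi ≤ P x := hmono (Set.left_mem_Icc.2 hx.le) hxm hxm.1
    have h2 : P x ≤ P xip := hmono hxm (Set.right_mem_Icc.2 hx.le) hxm.2
    rw [hPa] at h1; rw [hPb, hm0] at h2
    linarith
  have e1 := hconst ((xi + xip) / 2) (by constructor <;> [linarith; linarith])
  have e2 := hconst (xi + (xip - xi) / 4) (by constructor <;> [linarith; linarith])
  rw [hP] at e1 e2
  rw [hm0] at e1 e2
  have hxih : xip - xi = h := by rw [hh]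
  have he1 : dfi * (h / 2) + (0 - dfi) / h * (h / 2) ^ 2
      + (dfip + dfi - 2 * 0) / h ^ 2 * (h / 2) ^ 2 * (-(h / 2)) = 0 := by
    have : (xi + xip) / 2 - xi = h / 2 := by rw [hh]; ring
    have h2 : (xi + xip) / 2 - xip = -(h / 2) := by rw [hh]; ring
    rw [this, h2] at e1
    linarith
  have he2 : dfi * (h / 4) + (0 - dfi) / h * (h / 4) ^ 2
      + (dfip + dfi - 2 * 0) / h ^ 2 * (h / 4) ^ 2 * (-(3 * h / 4)) = 0 := by
    have : xi + (xip - xi) / 4 - xi = h / 4 := by rw [hh]; ring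
    have h2 : xi + (xip - xi) / 4 - xip = -(3 * h / 4) := by rw [hh]; ring
    rw [this, h2] at e2
    linarith
  have hh2 : h ^ 2 ≠ 0 := pow_ne_zero 2 hhne
  have k1 : dfi = dfip := by
    field_simp at he1
    have hq : h ^ 2 * ((dfi - dfip) * 8) = 0 := by linear_combination (8 * h) * he1
    rcases mul_eq_zero.1 hq with h' | h'
    · exact absurd h' hh2
    · linarith
  have k2 : 3 * dfi = dfip := by
    field_simp at he2
    have hq : h ^ 2 * ((3 * dfi - dfip) * 192) = 0 := by linear_combination (64 * h) * he2
    rcases mul_eq_zero.1 hq with h' | h'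
    · exact absurd h' hh2
    · linarith
  constructor <;> linarith

/-- Fritsch–Carlson necessary condition for monotonicity of a cubic Hermite
interpolant: the derivative data must have the same sign as the slope. -/
theorem fritsch_carlson_necessary
    (xi xip fi fip dfi dfip h m : ℝ)
    (hx : xi < xip)
    (hh : h = xip - xi)
    (hm : m = (fip - fi) / h)
    (P : ℝ → ℝ)
    (hP : ∀ x, P x = fi + dfi * (x - xi) + ((m - dfi) / h) * (x - xi) ^ 2
        + ((dfip + dfi - 2 * m) / h ^ 2) * (x - xi) ^ 2 * (x - xip))
    (hmono : MonotoneOn P (Set.Icc xi xip) ∨ AntitoneOn P (Set.Icc xi xip)) :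
    dfi * m ≥ 0 ∧ dfip * m ≥ 0 ∧
      (dfi ≠ 0 → Real.sign dfi = Real.sign m) ∧
      (dfip ≠ 0 → Real.sign dfip = Real.sign m) := by
  rcases hmono with hmono | hanti
  · obtain ⟨h1, h2, h3, h4⟩ := fc_mono_aux xi xip fi fip dfi dfip h m hx hh hm P hP hmono
    refine ⟨mul_nonneg h2 h1, mul_nonneg h3 h1, ?_, ?_⟩
    · intro hne
      have hdp : 0 < dfi := lt_of_le_of_ne h2 (Ne.symm hne)
      have hmp : 0 < m := by
        rcases lt_or_eq_of_le h1 with h | h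
        · exact h
        · exact absurd (h4 h.symm).1 hne
      rw [Real.sign_of_pos hdp, Real.sign_of_pos hmp]
    · intro hne
      have hdp : 0 < dfip := lt_of_le_of_ne h3 (Ne.symm hne)
      have hmp : 0 < m := by
        rcases lt_or_eq_of_le h1 with h | h
        · exact h
        · exact absurd (h4 h.symm).2 hne
      rw [Real.sign_of_pos hdp, Real.sign_of_pos hmp]
  · have hmono' : MonotoneOn (fun x => -P x) (Set.Icc xi xip) := fun a ha b hb hab =>
      neg_le_neg (hanti ha hb hab)
    have hP' : ∀ x, (fun x => -P x) x = -fi + (-dfi) * (x - xi)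
        + ((-m - -dfi) / h) * (x - xi) ^ 2
        + ((-dfip + -dfi - 2 * (-m)) / h ^ 2) * (x - xi) ^ 2 * (x - xip) := by
      intro x
      simp only [hP]
      ring
    have hm' : -m = (-fip - -fi) / h := by rw [hm]; ring
    obtain ⟨h1, h2, h3, h4⟩ := fc_mono_aux xi xip (-fi) (-fip) (-dfi) (-dfip) h (-m)
      hx hh hm' (fun x => -P x) hP' hmono'
    refine ⟨by nlinarith, by nlinarith, ?_, ?_⟩
    · intro hne
      have hdp : dfi < 0 := by
        rcases lt_or_eq_of_le h2 with h | h
        · linarith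
        · exact absurd (by linarith : dfi = 0) hne
      have hmp : m < 0 := by
        rcases lt_or_eq_of_le h1 with h | h
        · linarith
        · have := (h4 h.symm).1; exact absurd (by linarith : dfi = 0) hne
      rw [Real.sign_of_neg hdp, Real.sign_of_neg hmp]
    · intro hne
      have hdp : dfip < 0 := by
        rcases lt_or_eq_of_le h3 with h | h
        · linarith
        · exact absurd (by linarith : dfip = 0) hne
      have hmp : m < 0 := by
        rcases lt_or_eq_of_le h1 with h | h
        · linarith
        · have := (h4 h.symm).2; exact absurd (by linarith : dfip = 0) hne
      rw [Real.sign_of_neg hdp, Real.sign_of_neg hmp]
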